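/- arXiv:2312.16936 — 3 statements merged into one kernel-verified Lean document; each statement's English description precedes it below -/
import Mathlib

section
/- Let K : (Fin n → ℝ) →ₗ[ℝ] (Fin m → ℝ) and L : (Fin n → ℝ) →ₗ[ℝ] (Fin n → ℝ) be linear maps with ker K ∩ ker L = {0}, let y : Fin m → ℝ, and let α > 0. Then the functional J(x) = ‖K x − y‖₂² + α * ‖L x‖₁, where ‖·‖₂ is the Euclidean norm and ‖v‖₁ = Σ_i |v i|, attains its minimum: there exists x* : Fin n → ℝ such that J(x*) ≤ J(x) for all x : Fin n → ℝ. -/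
open Finset Filter

/-- Existence of minimizers of the Tikhonov-type graph-Laplacian functional
`J(x) = ‖K x − y‖₂² + α * ‖L x‖₁` when `ker K ∩ ker L = {0}`. -/
theorem exists_minimizer_graph_functional
    (n m : ℕ)
    (K : (Fin n → ℝ) →ₗ[ℝ] (Fin m → ℝ))
    (L : (Fin n → ℝ) →ₗ[ℝ] (Fin n → ℝ))
    (hker : LinearMap.ker K ⊓ LinearMap.ker L = ⊥)
    (y : Fin m → ℝ) (α : ℝ) (hα : 0 < α) :
    ∃ xstar : Fin n → ℝ, ∀ x : Fin n → ℝ,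
      (∑ j, (K xstar j - y j) ^ 2) + α * ∑ i, |L xstar i| ≤
        (∑ j, (K x j - y j) ^ 2) + α * ∑ i, |L x i| := by
  classical
  set ρ : (Fin m → ℝ) → EuclideanSpace ℝ (Fin m) :=
    fun v => (EuclideanSpace.equiv (Fin m) ℝ).symm v with hρ
  have hρsq : ∀ v : Fin m → ℝ, ‖ρ v‖ ^ 2 = ∑ j, (v j) ^ 2 := by
    intro v
    rw [EuclideanSpace.norm_eq, Real.sq_sqrt (by positivity)]
    refine Finset.sum_congr rfl fun j _ => ?_
    simp [ρ, Real.norm_eq_abs, sq_abs]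
  have hρ0 : ∀ v : Fin m → ℝ, ρ v = 0 → v = 0 := by
    intro v hv
    have := congrArg (EuclideanSpace.equiv (Fin m) ℝ) hv
    simpa [ρ] using this
  have hρsub : ∀ v w : Fin m → ℝ, ρ (v - w) = ρ v - ρ w := by
    intro v w; simp [ρ, map_sub]
  have hρsmul : ∀ (t : ℝ) (v : Fin m → ℝ), ρ (t • v) = t • ρ v := by
    intro t v; simp [ρ, map_smul]
  set A : (Fin n → ℝ) → ℝ := fun x => ‖ρ (K x)‖ with hA
  set B : (Fin n → ℝ) → ℝ := fun x => ∑ i, |L x i| with hB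
  set q : (Fin n → ℝ) → ℝ := fun x => A x + B x with hq
  set J : (Fin n → ℝ) → ℝ :=
    fun x => (∑ j, (K x j - y j) ^ 2) + α * B x with hJ
  have hKc : Continuous K := K.continuous_of_finiteDimensional
  have hLc : Continuous L := L.continuous_of_finiteDimensional
  have hρc : Continuous ρ := (EuclideanSpace.equiv (Fin m) ℝ).symm.continuous
  have hAc : Continuous A := (hρc.comp hKc).norm
  have hBc : Continuous B := by
    apply continuous_finset_sum
    intro i _
    exact ((continuous_apply i).comp hLc).abs
  have hqc : Continuous q := hAc.add hBc
  have hJc : Continuous J := by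
    apply Continuous.add ?_ (continuous_const.mul hBc)
    apply continuous_finset_sum
    intro j _
    exact (((continuous_apply j).comp hKc).sub continuous_const).pow 2
  have hA0 : ∀ x, 0 ≤ A x := fun x => norm_nonneg _
  have hB0 : ∀ x, 0 ≤ B x := fun x => Finset.sum_nonneg fun i _ => abs_nonneg _
  -- homogeneity of q
  have hqhom : ∀ (t : ℝ) (x : Fin n → ℝ), q (t • x) = |t| * q x := by
    intro t x
    have hA' : A (t • x) = |t| * A x := by
      simp only [hA, map_smul, hρsmul, norm_smul, Real.norm_eq_abs]
    have hB' : B (t • x) = |t| * B x := by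
      simp only [hB, map_smul, Pi.smul_apply, smul_eq_mul, abs_mul,
        Finset.mul_sum]
    simp [hq, hA', hB', mul_add]
  -- coercivity constant
  have hcoer : ∃ c : ℝ, 0 < c ∧ ∀ x, c * ‖x‖ ≤ q x := by
    by_cases hn : (Metric.sphere (0 : Fin n → ℝ) 1).Nonempty
    · obtain ⟨u, hu, hmin'⟩ := (isCompact_sphere (0 : Fin n → ℝ) 1).exists_isMinOn
        hn hqc.continuousOn
      have hmin : ∀ v ∈ Metric.sphere (0 : Fin n → ℝ) 1, q u ≤ q v :=
        fun v hv => hmin' hv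
      have hu1 : ‖u‖ = 1 := by simpa using Metric.mem_sphere.mp hu
      have hqu : 0 < q u := by
        rcases lt_or_eq_of_le (add_nonneg (hA0 u) (hB0 u)) with h | h
        · exact h
        · exfalso
          have hAu : A u = 0 := by
            have h1 := hB0 u; have h2 := hA0 u; linarith
          have hBu : B u = 0 := by
            have h2 := hA0 u; linarith
          have hKu : K u = 0 := by
            apply hρ0
            exact norm_eq_zero.mp hAu
          have hLu : L u = 0 := by
            funext i
            have h1 : ∀ i ∈ Finset.univ, |L u i| = 0 := by
              have := (Finset.sum_eq_zero_iff_of_nonneg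
                (fun i _ => abs_nonneg (L u i))).mp hBu
              exact this
            simpa using abs_eq_zero.mp (h1 i (Finset.mem_univ i))
          have : u ∈ LinearMap.ker K ⊓ LinearMap.ker L := by
            simp [LinearMap.mem_ker, hKu, hLu]
          rw [hker] at this
          simp only [Submodule.mem_bot] at this
          rw [this] at hu1
          simp at hu1
      refine ⟨q u, hqu, fun x => ?_⟩
      by_cases hx : x = 0
      · subst hx
        simp only [norm_zero, mul_zero]
        exact add_nonneg (hA0 0) (hB0 0)
      · have hxn : (0:ℝ) < ‖x‖ := norm_pos_iff.mpr hx
        set v : Fin n → ℝ := ‖x‖⁻¹ • x with hv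
        have hvs : v ∈ Metric.sphere (0 : Fin n → ℝ) 1 := by
          simp [hv, norm_smul, abs_of_pos (inv_pos.mpr hxn),
            inv_mul_cancel₀ hxn.ne']
        have h1 : q u ≤ q v := hmin v hvs
        have h2 : q v = ‖x‖⁻¹ * q x := by
          rw [hv, hqhom]
          congr 1
          exact abs_of_pos (inv_pos.mpr hxn)
        rw [h2] at h1
        calc q u * ‖x‖ ≤ (‖x‖⁻¹ * q x) * ‖x‖ := by
              exact mul_le_mul_of_nonneg_right h1 hxn.le
          _ = q x := by field_simp
    · refine ⟨1, one_pos, fun x => ?_⟩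
      have hx0 : ‖x‖ = 0 := by
        by_contra h
        have hxn : (0:ℝ) < ‖x‖ := lt_of_le_of_ne (norm_nonneg x) (Ne.symm h)
        exact hn ⟨‖x‖⁻¹ • x, by
          simp [norm_smul, abs_of_pos (inv_pos.mpr hxn), inv_mul_cancel₀ hxn.ne']⟩
      rw [hx0, mul_zero]
      exact add_nonneg (hA0 x) (hB0 x)
  obtain ⟨c, hc, hcq⟩ := hcoer
  -- lower bound for J
  set Y : ℝ := ‖ρ y‖ with hY
  have hY0 : 0 ≤ Y := norm_nonneg _
  set m0 : ℝ := min 1 α with hm0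
  have hm0pos : 0 < m0 := lt_min one_pos hα
  have hm01 : m0 ≤ 1 := min_le_left _ _
  have hm0α : m0 ≤ α := min_le_right _ _
  set C : ℝ := α * (Y + 1) + Y with hC
  have hlow : ∀ x, m0 * q x - C ≤ J x := by
    intro x
    have hsum : ∑ j, (K x j - y j) ^ 2 = ‖ρ (K x) - ρ y‖ ^ 2 := by
      rw [← hρsub, hρsq]
      simp
    have h1 : A x - Y ≤ ‖ρ (K x) - ρ y‖ := norm_sub_norm_le _ _
    have hS0 : 0 ≤ ∑ j, (K x j - y j) ^ 2 :=
      Finset.sum_nonneg fun j _ => sq_nonneg _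
    have ha := hA0 x
    have hb := hB0 x
    simp only [hJ, hq]
    by_cases hcase : A x ≤ Y + 1
    · nlinarith [mul_le_mul_of_nonneg_left hcase hm0pos.le,
        mul_le_mul_of_nonneg_right hm0α hb]
    · push_neg at hcase
      have h2 : (A x - Y) ^ 2 ≤ ‖ρ (K x) - ρ y‖ ^ 2 := by
        apply pow_le_pow_left₀ (by linarith) h1
      rw [hsum] at *
      nlinarith [mul_le_mul_of_nonneg_right hm0α hb,
        mul_le_mul_of_nonneg_right hm01 ha, sq_nonneg (A x - Y - 1)]
  -- coercivity of J
  have hJcoer : Tendsto J (cocompact (Fin n → ℝ)) atTop := by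
    apply tendsto_atTop_mono (fun x => ?_)
      (Filter.tendsto_atTop_add_const_right _ (-C)
        ((tendsto_norm_cocompact_atTop.const_mul_atTop (mul_pos hm0pos hc))))
    have := hlow x
    have h2 : m0 * (c * ‖x‖) ≤ m0 * q x :=
      mul_le_mul_of_nonneg_left (hcq x) hm0pos.le
    calc m0 * c * ‖x‖ + -C = m0 * (c * ‖x‖) - C := by ring
      _ ≤ m0 * q x - C := by linarith
      _ ≤ J x := this
  obtain ⟨xstar, hxstar⟩ := hJc.exists_forall_le hJcoer
  exact ⟨xstar, fun x => hxstar x⟩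
end

section
/- Let K be an m × n real matrix and α > 0, and define the Tikhonov reconstructor R_α(y) = (Kᵀ K + α • I)⁻¹ (Kᵀ y) for y : Fin m → ℝ. Then R_α is Lipschitz continuous with constant 1/(2√α): for all y₁, y₂ : Fin m → ℝ, ‖R_α(y₁) − R_α(y₂)‖₂ ≤ ‖y₁ − y₂‖₂ / (2 * √α), where ‖·‖₂ is the Euclidean norm. -/
open Finset Matrix

/-- The Tikhonov reconstructor `R_α(y) = (Kᵀ K + α • I)⁻¹ (Kᵀ y)` is Lipschitz with
constant `1 / (2√α)` in the Euclidean norm. -/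
theorem tikhonov_reconstructor_lipschitz
    (n m : ℕ)
    (K : Matrix (Fin m) (Fin n) ℝ)
    (α : ℝ) (hα : 0 < α)
    (Rα : (Fin m → ℝ) → (Fin n → ℝ))
    (hR : ∀ y : Fin m → ℝ,
      Rα y = (Kᵀ * K + α • (1 : Matrix (Fin n) (Fin n) ℝ))⁻¹.mulVec (Kᵀ.mulVec y)) :
    ∀ y₁ y₂ : Fin m → ℝ,
      Real.sqrt (∑ i, (Rα y₁ i - Rα y₂ i) ^ 2) ≤
        Real.sqrt (∑ j, (y₁ j - y₂ j) ^ 2) / (2 * Real.sqrt α) := by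
  intro y₁ y₂
  set M : Matrix (Fin n) (Fin n) ℝ := Kᵀ * K + α • (1 : Matrix (Fin n) (Fin n) ℝ) with hMdef
  -- M is positive definite, hence invertible
  have hKsemi : (Kᵀ * K).PosSemidef := by
    have := Matrix.posSemidef_conjTranspose_mul_self K
    rwa [Matrix.conjTranspose_eq_transpose_of_trivial] at this
  have hsmul : (α • (1 : Matrix (Fin n) (Fin n) ℝ)).PosDef := by
    exact Matrix.PosDef.one.smul hα
  have hM : M.PosDef := Matrix.PosDef.posSemidef_add hKsemi hsmul
  have hMdet : IsUnit M.det := hM.det_pos.ne'.isUnit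
  set d : Fin m → ℝ := y₁ - y₂ with hd
  set x : Fin n → ℝ := fun i => Rα y₁ i - Rα y₂ i with hx
  -- x = M⁻¹ Kᵀ d
  have hxd : x = M⁻¹.mulVec (Kᵀ.mulVec d) := by
    funext i
    have : x = M⁻¹.mulVec (Kᵀ.mulVec y₁) - M⁻¹.mulVec (Kᵀ.mulVec y₂) := by
      funext j; simp [hx, hR y₁, hR y₂]
    rw [this, hd, ← Matrix.mulVec_sub, ← Matrix.mulVec_sub]
  -- M x = Kᵀ d
  have hMx : M.mulVec x = Kᵀ.mulVec d := by
    rw [hxd, Matrix.mulVec_mulVec, Matrix.mul_nonsing_inv M hMdet, Matrix.one_mulVec]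
  -- key identity: ‖Kx‖² + α‖x‖² = (Kx) ⬝ d
  have key : (K.mulVec x) ⬝ᵥ (K.mulVec x) + α * (x ⬝ᵥ x) = (K.mulVec x) ⬝ᵥ d := by
    have h1 : x ⬝ᵥ M.mulVec x = x ⬝ᵥ Kᵀ.mulVec d := by rw [hMx]
    have h2 : x ⬝ᵥ M.mulVec x
        = (K.mulVec x) ⬝ᵥ (K.mulVec x) + α * (x ⬝ᵥ x) := by
      rw [hMdef, Matrix.add_mulVec, dotProduct_add, ← Matrix.mulVec_mulVec,
        Matrix.dotProduct_mulVec x Kᵀ, Matrix.vecMul_transpose, Matrix.smul_mulVec,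
        Matrix.one_mulVec, dotProduct_smul, smul_eq_mul]
    have h3 : x ⬝ᵥ Kᵀ.mulVec d = (K.mulVec x) ⬝ᵥ d := by
      rw [Matrix.dotProduct_mulVec x Kᵀ, Matrix.vecMul_transpose]
    rw [← h2, h1, h3]
  set D : ℝ := Real.sqrt (∑ j, (y₁ j - y₂ j) ^ 2) with hD
  have hDnn : 0 ≤ D := Real.sqrt_nonneg _
  -- Cauchy-Schwarz
  have hcs : (K.mulVec x) ⬝ᵥ d ≤
      Real.sqrt ((K.mulVec x) ⬝ᵥ (K.mulVec x)) * D := by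
    have h := Real.sum_mul_le_sqrt_mul_sqrt Finset.univ (K.mulVec x) d
    have hd2 : ∀ j, d j ^ 2 = (y₁ j - y₂ j) ^ 2 := fun j => by simp [hd]
    simpa [dotProduct, hD, sq, hd2, ← sq] using h
  set c : ℝ := (K.mulVec x) ⬝ᵥ (K.mulVec x) with hc
  set a : ℝ := x ⬝ᵥ x with ha
  have hcnn : 0 ≤ c := Finset.sum_nonneg fun i _ => mul_self_nonneg _
  have hann : 0 ≤ a := Finset.sum_nonneg fun i _ => mul_self_nonneg _
  have hsc : Real.sqrt c ^ 2 = c := Real.sq_sqrt hcnn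
  -- α a ≤ D²/4
  have hbound : α * a ≤ D ^ 2 / 4 := by
    have h := key.le.trans hcs
    nlinarith [sq_nonneg (Real.sqrt c - D / 2)]
  -- conclude
  have hxa : (∑ i, (Rα y₁ i - Rα y₂ i) ^ 2) = a := by
    rw [ha, dotProduct]
    exact Finset.sum_congr rfl fun i _ => by rw [hx]; ring
  rw [hxa]
  have hpos : (0:ℝ) < 2 * Real.sqrt α := by positivity
  have haD : a ≤ (D / (2 * Real.sqrt α)) ^ 2 := by
    rw [div_pow, mul_pow, Real.sq_sqrt hα.le, le_div_iff₀ (by positivity)]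
    nlinarith
  calc Real.sqrt a ≤ Real.sqrt ((D / (2 * Real.sqrt α)) ^ 2) := Real.sqrt_le_sqrt haD
    _ = D / (2 * Real.sqrt α) := Real.sqrt_sq (by positivity)
end

section
/- Let K be an m × n real matrix and let y : Fin m → ℝ lie in the range of K (viewed as a linear map ℝⁿ → ℝᵐ). Let x† be the unique solution of K x = y that is Euclidean-orthogonal to the kernel of K (the minimum-norm solution). Then the Tikhonov reconstructions converge to x† as the regularization parameter tends to zero: (Kᵀ K + α • I)⁻¹ (Kᵀ y) → x† as α → 0⁺, in the Euclidean norm on ℝⁿ. -/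
open Finset Matrix Filter

private lemma tikhonov_aux_sq {n m : ℕ} (K : Matrix (Fin m) (Fin n) ℝ)
    (v : Fin n → ℝ) : ((Kᵀ * K) *ᵥ v) ⬝ᵥ v = (K *ᵥ v) ⬝ᵥ (K *ᵥ v) := by
  rw [← Matrix.mulVec_mulVec, Matrix.mulVec_transpose, ← Matrix.dotProduct_mulVec]

private lemma dotProduct_mulVec_self_nonneg {n m : ℕ} (K : Matrix (Fin m) (Fin n) ℝ)
    (v : Fin n → ℝ) : 0 ≤ ((Kᵀ * K) *ᵥ v) ⬝ᵥ v := by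
  rw [tikhonov_aux_sq]
  exact Finset.sum_nonneg fun i _ => mul_self_nonneg _

/-- If `x` is orthogonal to the kernel of a real symmetric matrix `A`, then `x` is in the
range of `A`. -/
private lemma mem_range_of_orth {n : ℕ} (A : Matrix (Fin n) (Fin n) ℝ) (hA : Aᴴ = A)
    (x : Fin n → ℝ) (hx : ∀ z : Fin n → ℝ, A.mulVec z = 0 → ∑ i, x i * z i = 0) :
    ∃ w : Fin n → ℝ, A.mulVec w = x := by
  set T : EuclideanSpace ℝ (Fin n) →ₗ[ℝ] EuclideanSpace ℝ (Fin n) := Matrix.toEuclideanLin A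
    with hT_def
  have hT : LinearMap.IsSymmetric T := by
    rw [LinearMap.isSymmetric_iff_isSelfAdjoint, LinearMap.isSelfAdjoint_iff']
    rw [hT_def, ← Matrix.toEuclideanLin_conjTranspose_eq_adjoint, hA]
  have hker : (LinearMap.range T)ᗮ = LinearMap.ker T := by
    ext z
    simp only [Submodule.mem_orthogonal, LinearMap.mem_ker]
    constructor
    · intro h
      have h1 : inner ℝ (T z) (T z) = 0 := by
        have := h (T (T z)) (LinearMap.mem_range_self T (T z))
        rwa [hT (T z) z] at this
      exact inner_self_eq_zero.mp h1
    · rintro h u ⟨y, rfl⟩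
      rw [hT y z, h, inner_zero_right]
  have hrange : (LinearMap.ker T)ᗮ = LinearMap.range T := by
    rw [← hker, Submodule.orthogonal_orthogonal]
  have hxmem : (WithLp.equiv 2 (Fin n → ℝ)).symm x ∈ (LinearMap.ker T)ᗮ := by
    rw [Submodule.mem_orthogonal]
    intro z hz
    have hz0 : A *ᵥ (WithLp.equiv 2 (Fin n → ℝ)) z = 0 := by
      have : T z = 0 := hz
      rw [hT_def, Matrix.toEuclideanLin_apply] at this
      have := congrArg (WithLp.equiv 2 (Fin n → ℝ)) this
      simpa using this
    have horth := hx ((WithLp.equiv 2 (Fin n → ℝ)) z) hz0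
    rw [PiLp.inner_apply]
    simp only [RCLike.inner_apply, starRingEnd_apply, star_trivial]
    rw [← horth]
    apply Finset.sum_congr rfl
    intro i _
    simp [WithLp.equiv_symm_apply, mul_comm]
  rw [hrange] at hxmem
  obtain ⟨w, hw⟩ := hxmem
  refine ⟨(WithLp.equiv 2 (Fin n → ℝ)) w, ?_⟩
  rw [hT_def, Matrix.toEuclideanLin_apply] at hw
  have := congrArg (WithLp.equiv 2 (Fin n → ℝ)) hw
  simpa using this

/-- Convergence of Tikhonov regularization for exact data: for `y ∈ range K`, the
Tikhonov reconstructions `(Kᵀ K + α • I)⁻¹ (Kᵀ y)` converge in Euclidean norm to the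
minimum-norm solution `x†` as `α → 0⁺`. -/
theorem tikhonov_converges_to_min_norm_solution
    (n m : ℕ)
    (K : Matrix (Fin m) (Fin n) ℝ)
    (y : Fin m → ℝ) (hy : ∃ x : Fin n → ℝ, K.mulVec x = y)
    (xd : Fin n → ℝ)
    (hxd : K.mulVec xd = y)
    (hxd_orth : ∀ z : Fin n → ℝ, K.mulVec z = 0 → ∑ i, xd i * z i = 0) :
    Tendsto
      (fun α : ℝ =>
        Real.sqrt (∑ i,
          (((Kᵀ * K + α • (1 : Matrix (Fin n) (Fin n) ℝ))⁻¹.mulVec (Kᵀ.mulVec y)) i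
            - xd i) ^ 2))
      (nhdsWithin 0 (Set.Ioi 0)) (nhds 0) := by
  have hKT : Kᵀ = Kᴴ := (Matrix.conjTranspose_eq_transpose_of_trivial K).symm
  -- `xd` is in the range of `KᵀK`
  have hAsymm : (Kᵀ * K)ᴴ = Kᵀ * K := by
    rw [Matrix.conjTranspose_mul, hKT, Matrix.conjTranspose_conjTranspose, ← hKT]
  have horth' : ∀ z : Fin n → ℝ, (Kᵀ * K).mulVec z = 0 → ∑ i, xd i * z i = 0 := by
    intro z hz
    apply hxd_orth
    have h0 : (K *ᵥ z) ⬝ᵥ (K *ᵥ z) = 0 := by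
      rw [← tikhonov_aux_sq, hz, zero_dotProduct]
    funext i
    have h1 := Finset.sum_eq_zero_iff_of_nonneg (fun j _ => mul_self_nonneg ((K *ᵥ z) j)) |>.mp h0
    simpa using mul_self_eq_zero.mp (h1 i (Finset.mem_univ i))
  obtain ⟨w, hw⟩ := mem_range_of_orth (Kᵀ * K) hAsymm xd horth'
  set C : ℝ := Real.sqrt (w ⬝ᵥ w) with hC_def
  -- the key quantitative bound
  have hbound : ∀ α ∈ Set.Ioi (0:ℝ),
      Real.sqrt (∑ i,
        (((Kᵀ * K + α • (1 : Matrix (Fin n) (Fin n) ℝ))⁻¹.mulVec (Kᵀ.mulVec y)) i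
          - xd i) ^ 2) ≤ α * C := by
    intro α hα
    rw [Set.mem_Ioi] at hα
    set M : Matrix (Fin n) (Fin n) ℝ := Kᵀ * K + α • 1 with hM_def
    have hMpd : M.PosDef := by
      refine Matrix.PosDef.posSemidef_add ?_ ?_
      · rw [hKT]; exact Matrix.posSemidef_conjTranspose_mul_self K
      · refine ⟨?_, fun x hx => ?_⟩
        · simp [Matrix.IsHermitian, Matrix.conjTranspose_smul]
        · exact (Matrix.PosDef.one.smul hα).2 hx
    have hMdet : IsUnit M.det := hMpd.det_pos.ne'.isUnit
    have hM1 : M * M⁻¹ = 1 := Matrix.mul_nonsing_inv M hMdet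
    have hM2 : M⁻¹ * M = 1 := Matrix.nonsing_inv_mul M hMdet
    have hMcancel : ∀ u : Fin n → ℝ, M⁻¹ *ᵥ (M *ᵥ u) = u := by
      intro u; rw [Matrix.mulVec_mulVec, hM2, Matrix.one_mulVec]
    have hMcancel' : ∀ u : Fin n → ℝ, M *ᵥ (M⁻¹ *ᵥ u) = u := by
      intro u; rw [Matrix.mulVec_mulVec, hM1, Matrix.one_mulVec]
    set v : Fin n → ℝ := M⁻¹ *ᵥ w with hv_def
    have hMv : M *ᵥ v = w := hMcancel' w
    -- Kᵀ y = (KᵀK) xd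
    have hyK : Kᵀ *ᵥ y = (Kᵀ * K) *ᵥ xd := by
      rw [← hxd, Matrix.mulVec_mulVec]
    -- (KᵀK) xd = M xd - α xd
    have hAxd : (Kᵀ * K) *ᵥ xd = M *ᵥ xd - α • xd := by
      rw [hM_def, Matrix.add_mulVec, Matrix.smul_mulVec, Matrix.one_mulVec]
      abel
    -- xd = M w - α w hence M⁻¹ xd = w - α v
    have hxdw : M⁻¹ *ᵥ xd = w - α • v := by
      have h1 : xd = M *ᵥ w - α • w := by
        rw [← hw, hM_def, Matrix.add_mulVec, Matrix.smul_mulVec, Matrix.one_mulVec]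
        abel
      rw [h1, Matrix.mulVec_sub, hMcancel, Matrix.mulVec_smul]
    -- error vector identity
    have hkey : M⁻¹ *ᵥ (Kᵀ *ᵥ y) - xd = (-α) • (w - α • v) := by
      rw [hyK, hAxd, Matrix.mulVec_sub, hMcancel, Matrix.mulVec_smul, hxdw]
      funext i
      simp only [Pi.sub_apply, Pi.smul_apply, smul_eq_mul]
      ring
    -- the quadratic estimate
    have hq : (w - α • v) ⬝ᵥ (w - α • v) ≤ w ⬝ᵥ w := by
      have hvv : 0 ≤ v ⬝ᵥ v := Finset.sum_nonneg fun i _ => mul_self_nonneg _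
      have hAv : 0 ≤ ((Kᵀ * K) *ᵥ v) ⬝ᵥ v := dotProduct_mulVec_self_nonneg K v
      have hwv : w ⬝ᵥ v = ((Kᵀ * K) *ᵥ v) ⬝ᵥ v + α * (v ⬝ᵥ v) := by
        rw [← hMv, hM_def, Matrix.add_mulVec, Matrix.smul_mulVec, Matrix.one_mulVec,
          add_dotProduct, smul_dotProduct]
        simp [smul_eq_mul]
      have hexp : (w - α • v) ⬝ᵥ (w - α • v)
          = w ⬝ᵥ w - 2 * α * (w ⬝ᵥ v) + α ^ 2 * (v ⬝ᵥ v) := by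
        simp only [sub_dotProduct, dotProduct_sub, smul_dotProduct,
          dotProduct_smul, smul_eq_mul]
        rw [dotProduct_comm v w]
        ring
      rw [hexp, hwv]
      nlinarith [hα, hvv, hAv]
    -- conclude the bound
    have hsum : (∑ i, ((M⁻¹ *ᵥ (Kᵀ *ᵥ y)) i - xd i) ^ 2)
        = α ^ 2 * ((w - α • v) ⬝ᵥ (w - α • v)) := by
      have : ∀ i, (M⁻¹ *ᵥ (Kᵀ *ᵥ y)) i - xd i = (-α) * (w - α • v) i := by
        intro i
        have := congrFun hkey i
        simpa using this
      simp only [this]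
      simp only [dotProduct, Finset.mul_sum]
      apply Finset.sum_congr rfl
      intro i _
      ring
    rw [hsum, hC_def]
    rw [Real.sqrt_mul (sq_nonneg α), Real.sqrt_sq hα.le]
    exact mul_le_mul_of_nonneg_left (Real.sqrt_le_sqrt hq) hα.le
  -- squeeze
  have hlin : Tendsto (fun α : ℝ => α * C) (nhdsWithin 0 (Set.Ioi 0)) (nhds 0) := by
    have h1 : Tendsto (fun α : ℝ => α * C) (nhds 0) (nhds 0) := by
      simpa using (tendsto_id : Tendsto id (nhds (0:ℝ)) (nhds 0)).mul_const C
    exact h1.mono_left nhdsWithin_le_nhds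
  exact squeeze_zero' (Eventually.of_forall fun α => Real.sqrt_nonneg _)
    (eventually_nhdsWithin_of_forall hbound) hlin
end
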